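/- Weyl's inequality for Hermitian matrices: Let M₁, M₂ be n×n Hermitian matrices with eigenvalues listed in descending order λ₁ ≥ λ₂ ≥ ⋯ ≥ λ_n. Then for indices i, j with i + j − 1 ≤ n, λ_{i+j−1}(M₁ + M₂) ≤ λ_i(M₁) + λ_j(M₂). -/

import Mathlib

set_option maxHeartbeats 1600000

open Matrix

section WeylAux
open Module Submodule

variable {n : ℕ}

lemma repr_zero_of_not_mem (b : OrthonormalBasis (Fin n) ℂ (EuclideanSpace ℂ (Fin n)))
    (S : Set (Fin n)) {x : EuclideanSpace ℂ (Fin n)}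
    (hx : x ∈ Submodule.span ℂ (⇑b '' S)) {k : Fin n} (hk : k ∉ S) :
    b.repr x k = 0 := by
  rw [b.repr_apply_apply]
  have hle : Submodule.span ℂ (⇑b '' S) ≤ LinearMap.ker ((innerSL ℂ (b k)).toLinearMap) := by
    rw [Submodule.span_le]
    rintro _ ⟨l, hl, rfl⟩
    simp only [SetLike.mem_coe, LinearMap.mem_ker, ContinuousLinearMap.coe_coe, innerSL_apply_apply]
    exact b.orthonormal.2 (fun h => hk (h ▸ hl))
  simpa using hle hx

/-- shorthand for the quadratic form -/
noncomputable def quadForm (M : Matrix (Fin n) (Fin n) ℂ) (x : EuclideanSpace ℂ (Fin n)) : ℝ :=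
  Complex.re (inner ℂ x ((WithLp.equiv 2 _).symm (M *ᵥ (WithLp.equiv 2 _) x)) : ℂ)

lemma repr_mulVec (M : Matrix (Fin n) (Fin n) ℂ) (hM : M.IsHermitian)
    (x : EuclideanSpace ℂ (Fin n)) (k : Fin n) :
    hM.eigenvectorBasis.repr ((WithLp.equiv 2 _).symm (M *ᵥ (WithLp.equiv 2 _) x)) k
      = (hM.eigenvalues k : ℂ) * hM.eigenvectorBasis.repr x k := by
  have hsymm := (Matrix.isHermitian_iff_isSymmetric.mp hM)
  have h1 : ((WithLp.equiv 2 _).symm (M *ᵥ (WithLp.equiv 2 _) x)) = Matrix.toEuclideanLin M x := rfl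
  rw [h1, OrthonormalBasis.repr_apply_apply, ← hsymm (hM.eigenvectorBasis k) x]
  have h2 : Matrix.toEuclideanLin M (hM.eigenvectorBasis k)
      = (hM.eigenvalues k : ℂ) • hM.eigenvectorBasis k := by
    apply (WithLp.equiv 2 _).injective
    simp only [WithLp.equiv_apply, Matrix.ofLp_toEuclideanLin_apply]
    have := hM.mulVec_eigenvectorBasis k
    simpa using this
  rw [h2, inner_smul_left, OrthonormalBasis.repr_apply_apply]
  simp [Complex.conj_ofReal]

lemma quadForm_eq_sum (M : Matrix (Fin n) (Fin n) ℂ) (hM : M.IsHermitian)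
    (x : EuclideanSpace ℂ (Fin n)) :
    quadForm M x = ∑ k, hM.eigenvalues k * ‖hM.eigenvectorBasis.repr x k‖ ^ 2 := by
  unfold quadForm
  have h1 : ((WithLp.equiv 2 _).symm (M *ᵥ (WithLp.equiv 2 _) x)) = Matrix.toEuclideanLin M x := rfl
  rw [h1, ← hM.eigenvectorBasis.repr.inner_map_map x (Matrix.toEuclideanLin M x)]
  rw [PiLp.inner_apply]
  rw [Complex.re_sum]
  apply Finset.sum_congr rfl
  intro k _
  have := repr_mulVec M hM x k
  rw [h1] at this
  rw [RCLike.inner_apply, this]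
  set c := hM.eigenvectorBasis.repr x k
  have hc : (starRingEnd ℂ) c * c = ((‖c‖ ^ 2 : ℝ) : ℂ) := by
    rw [RCLike.conj_mul]; norm_cast
  have : (starRingEnd ℂ) c * ((hM.eigenvalues k : ℂ) * c)
      = (hM.eigenvalues k : ℂ) * ((‖c‖ ^ 2 : ℝ) : ℂ) := by
    linear_combination (↑(hM.eigenvalues k) : ℂ) * hc
  rw [mul_comm, this]
  simp [← Complex.ofReal_pow]

lemma norm_sq_eq_sum_repr (b : OrthonormalBasis (Fin n) ℂ (EuclideanSpace ℂ (Fin n)))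
    (x : EuclideanSpace ℂ (Fin n)) :
    ‖x‖ ^ 2 = ∑ k, ‖b.repr x k‖ ^ 2 := by
  rw [← b.repr.norm_map x, EuclideanSpace.norm_eq]
  rw [Real.sq_sqrt (Finset.sum_nonneg fun k _ => sq_nonneg _)]

lemma quadForm_le (M : Matrix (Fin n) (Fin n) ℂ) (hM : M.IsHermitian)
    (S : Set (Fin n)) (c : ℝ) (hc : ∀ k ∈ S, hM.eigenvalues k ≤ c)
    {x : EuclideanSpace ℂ (Fin n)}
    (hx : x ∈ Submodule.span ℂ (⇑hM.eigenvectorBasis '' S)) :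
    quadForm M x ≤ c * ‖x‖ ^ 2 := by
  rw [quadForm_eq_sum M hM x, norm_sq_eq_sum_repr hM.eigenvectorBasis x, Finset.mul_sum]
  apply Finset.sum_le_sum
  intro k _
  by_cases hk : k ∈ S
  · exact mul_le_mul_of_nonneg_right (hc k hk) (sq_nonneg _)
  · rw [repr_zero_of_not_mem _ S hx hk]; simp

lemma quadForm_ge (M : Matrix (Fin n) (Fin n) ℂ) (hM : M.IsHermitian)
    (S : Set (Fin n)) (c : ℝ) (hc : ∀ k ∈ S, c ≤ hM.eigenvalues k)
    {x : EuclideanSpace ℂ (Fin n)}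
    (hx : x ∈ Submodule.span ℂ (⇑hM.eigenvectorBasis '' S)) :
    c * ‖x‖ ^ 2 ≤ quadForm M x := by
  rw [quadForm_eq_sum M hM x, norm_sq_eq_sum_repr hM.eigenvectorBasis x, Finset.mul_sum]
  apply Finset.sum_le_sum
  intro k _
  by_cases hk : k ∈ S
  · exact mul_le_mul_of_nonneg_right (hc k hk) (sq_nonneg _)
  · rw [repr_zero_of_not_mem _ S hx hk]; simp

lemma quadForm_add (M₁ M₂ : Matrix (Fin n) (Fin n) ℂ) (x : EuclideanSpace ℂ (Fin n)) :
    quadForm (M₁ + M₂) x = quadForm M₁ x + quadForm M₂ x := by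
  unfold quadForm
  rw [Matrix.add_mulVec, WithLp.equiv_symm_apply, WithLp.toLp_add, inner_add_right, Complex.add_re]

lemma finrank_span_basis_image (b : OrthonormalBasis (Fin n) ℂ (EuclideanSpace ℂ (Fin n)))
    (T : Finset (Fin n)) :
    finrank ℂ (Submodule.span ℂ (⇑b '' ↑T)) = T.card := by
  have hli : LinearIndependent ℂ (fun t : T => b t) :=
    b.orthonormal.linearIndependent.comp _ Subtype.val_injective
  have himg : (⇑b '' ↑T) = Set.range (fun t : T => b t) := by
    ext y; simp
  rw [himg, finrank_span_eq_card hli, Fintype.card_coe]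

lemma finrank_inf_ge (U V : Submodule ℂ (EuclideanSpace ℂ (Fin n))) :
    finrank ℂ U + finrank ℂ V ≤ finrank ℂ ↥(U ⊓ V) + n := by
  have h1 := Submodule.finrank_sup_add_finrank_inf_eq U V
  have h2 : finrank ℂ ↥(U ⊔ V) ≤ n := by
    simpa using Submodule.finrank_le (U ⊔ V)
  omega

end WeylAux

open Module Submodule

/-- The `k`-th largest entry (0-indexed) of a finite tuple of reals. -/
noncomputable def kthLargest {m : ℕ} (v : Fin m → ℝ) (k : Fin m) : ℝ :=
  (v ∘ Tuple.sort v) ⟨m - 1 - (k : ℕ), by omega⟩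

theorem weyl_inequality {n : ℕ} (M₁ M₂ : Matrix (Fin n) (Fin n) ℂ)
    (h₁ : M₁.IsHermitian) (h₂ : M₂.IsHermitian)
    (i j : ℕ) (hi : 1 ≤ i) (hj : 1 ≤ j) (hij : i + j - 1 ≤ n) :
    kthLargest (h₁.add h₂).eigenvalues ⟨i + j - 2, by omega⟩ ≤
      kthLargest h₁.eigenvalues ⟨i - 1, by omega⟩ +
        kthLargest h₂.eigenvalues ⟨j - 1, by omega⟩ := by
  have hin : i ≤ n := by omega
  have hjn : j ≤ n := by omega
  set μ₁ := h₁.eigenvalues with hμ₁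
  set μ₂ := h₂.eigenvalues with hμ₂
  set μ₃ := (h₁.add h₂).eigenvalues with hμ₃
  set σ₁ := Tuple.sort μ₁ with hσ₁
  set σ₂ := Tuple.sort μ₂ with hσ₂
  set σ₃ := Tuple.sort μ₃ with hσ₃
  set T₁ : Finset (Fin n) := Finset.image σ₁ (Finset.Iic ⟨n - i, by omega⟩) with hT₁
  set T₂ : Finset (Fin n) := Finset.image σ₂ (Finset.Iic ⟨n - j, by omega⟩) with hT₂
  set T₃ : Finset (Fin n) := Finset.image σ₃ (Finset.Ici ⟨n - (i + j - 1), by omega⟩) with hT₃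
  have hT₁card : T₁.card = n - i + 1 := by
    rw [hT₁, Finset.card_image_of_injective _ σ₁.injective, Fin.card_Iic]
  have hT₂card : T₂.card = n - j + 1 := by
    rw [hT₂, Finset.card_image_of_injective _ σ₂.injective, Fin.card_Iic]
  have hT₃card : T₃.card = i + j - 1 := by
    rw [hT₃, Finset.card_image_of_injective _ σ₃.injective, Fin.card_Ici]
    simp; omega
  set V₁ := Submodule.span ℂ (⇑h₁.eigenvectorBasis '' ↑T₁) with hV₁
  set V₂ := Submodule.span ℂ (⇑h₂.eigenvectorBasis '' ↑T₂) with hV₂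
  set V₃ := Submodule.span ℂ (⇑(h₁.add h₂).eigenvectorBasis '' ↑T₃) with hV₃
  have hf₁ : finrank ℂ V₁ = n - i + 1 := by
    rw [hV₁, finrank_span_basis_image, hT₁card]
  have hf₂ : finrank ℂ V₂ = n - j + 1 := by
    rw [hV₂, finrank_span_basis_image, hT₂card]
  have hf₃ : finrank ℂ V₃ = i + j - 1 := by
    rw [hV₃, finrank_span_basis_image, hT₃card]
  have h12 := finrank_inf_ge V₁ V₂
  have h123 := finrank_inf_ge (V₁ ⊓ V₂) V₃
  have hmono : finrank ℂ ↥(V₁ ⊓ V₂) ≥ finrank ℂ V₁ + finrank ℂ V₂ - n := by omega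
  have hpos : 0 < finrank ℂ ↥(V₁ ⊓ V₂ ⊓ V₃) := by omega
  have hnt : Nontrivial ↥(V₁ ⊓ V₂ ⊓ V₃) := Module.finrank_pos_iff.mp hpos
  obtain ⟨⟨x, hxW⟩, hne⟩ := exists_ne (0 : ↥(V₁ ⊓ V₂ ⊓ V₃))
  have hx0 : x ≠ 0 := by
    intro h
    exact hne (by simp [Submodule.mk_eq_zero, h])
  obtain ⟨⟨hx1, hx2⟩, hx3⟩ := hxW
  -- eigenvalue bounds on the index sets
  have hb₁ : ∀ k ∈ (↑T₁ : Set (Fin n)), μ₁ k ≤ kthLargest μ₁ ⟨i - 1, by omega⟩ := by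
    intro k hk
    rw [hT₁] at hk
    simp only [Finset.coe_image, Set.mem_image, Finset.mem_coe, Finset.mem_Iic] at hk
    obtain ⟨p, hp, rfl⟩ := hk
    have hmon := Tuple.monotone_sort μ₁ (show p ≤ ⟨n - i, by omega⟩ from hp)
    simp only [kthLargest]
    have hidx : (⟨n - 1 - ((⟨i - 1, by omega⟩ : Fin n) : ℕ), by omega⟩ : Fin n)
        = ⟨n - i, by omega⟩ := by
      apply Fin.ext; simp; omega
    rw [hidx]
    exact hmon
  have hb₂ : ∀ k ∈ (↑T₂ : Set (Fin n)), μ₂ k ≤ kthLargest μ₂ ⟨j - 1, by omega⟩ := by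
    intro k hk
    rw [hT₂] at hk
    simp only [Finset.coe_image, Set.mem_image, Finset.mem_coe, Finset.mem_Iic] at hk
    obtain ⟨p, hp, rfl⟩ := hk
    have hmon := Tuple.monotone_sort μ₂ (show p ≤ ⟨n - j, by omega⟩ from hp)
    simp only [kthLargest]
    have hidx : (⟨n - 1 - ((⟨j - 1, by omega⟩ : Fin n) : ℕ), by omega⟩ : Fin n)
        = ⟨n - j, by omega⟩ := by
      apply Fin.ext; simp; omega
    rw [hidx]
    exact hmon
  have hb₃ : ∀ k ∈ (↑T₃ : Set (Fin n)), kthLargest μ₃ ⟨i + j - 2, by omega⟩ ≤ μ₃ k := by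
    intro k hk
    rw [hT₃] at hk
    simp only [Finset.coe_image, Set.mem_image, Finset.mem_coe, Finset.mem_Ici] at hk
    obtain ⟨p, hp, rfl⟩ := hk
    have hmon := Tuple.monotone_sort μ₃ (show (⟨n - (i + j - 1), by omega⟩ : Fin n) ≤ p from hp)
    simp only [kthLargest]
    have hidx : (⟨n - 1 - ((⟨i + j - 2, by omega⟩ : Fin n) : ℕ), by omega⟩ : Fin n)
        = ⟨n - (i + j - 1), by omega⟩ := by
      apply Fin.ext; simp; omega
    rw [hidx]
    exact hmon
  have q1 := quadForm_le M₁ h₁ ↑T₁ _ hb₁ hx1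
  have q2 := quadForm_le M₂ h₂ ↑T₂ _ hb₂ hx2
  have q3 := quadForm_ge (M₁ + M₂) (h₁.add h₂) ↑T₃ _ hb₃ hx3
  have qadd := quadForm_add M₁ M₂ x
  have hr : (0:ℝ) < ‖x‖ ^ 2 := pow_pos (norm_pos_iff.mpr hx0) 2
  have key : kthLargest μ₃ ⟨i + j - 2, by omega⟩ * ‖x‖ ^ 2
      ≤ (kthLargest μ₁ ⟨i - 1, by omega⟩ + kthLargest μ₂ ⟨j - 1, by omega⟩) * ‖x‖ ^ 2 := by
    rw [add_mul]; linarith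
  exact le_of_mul_le_mul_right key hr
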